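/- Let 0 ≤ b < d, φ(x) := exp(−x²/2) and m̂ := ∫_b^d φ(x) dx. For λ ≥ max(b², 1), define F(λ) := ∫_0^{1 − bλ^{-1/2}} ∫_b^{min(d, √λ(1−α₁))} φ(z) ( ∫_0^z φ(y)^{-1} ( ∫_{max(y,b)}^{min(d, y − z + √λ(1−α₁))} φ(x) dx ) dy ) dz dα₁, where an inner integral over an interval [u, v] with v < u is taken to be 0. Then lim_{λ → ∞} F(λ) = m̂² ∫_0^b φ(y)^{-1} dy + ∫_b^d φ(z) ( ∫_b^z φ(y)^{-1} ( ∫_y^d φ(x) dx ) dy ) dz. -/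

import Mathlib

open MeasureTheory Real Filter

/-- `φ(x) = exp(−x²/2)`. -/
noncomputable def phi (x : ℝ) : ℝ := Real.exp (-(x ^ 2 / 2))

/-- Integral of `f` over the interval `[u, v]`, taken to be `0` when `v < u`. -/
noncomputable def oint (u v : ℝ) (f : ℝ → ℝ) : ℝ := ∫ x in Set.Ioc u v, f x

open Set

@[continuity, fun_prop] lemma phi_cont : Continuous phi := by unfold phi; fun_prop
lemma phi_pos (x : ℝ) : 0 < phi x := Real.exp_pos _
@[continuity, fun_prop] lemma phi_inv_cont : Continuous (fun y => (phi y)⁻¹) := by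
  unfold phi; simp only [← Real.exp_neg, neg_neg]; fun_prop

noncomputable def Phi (t : ℝ) : ℝ := ∫ x in (0:ℝ)..t, phi x

@[continuity, fun_prop] lemma Phi_cont : Continuous Phi :=
  intervalIntegral.continuous_primitive (fun _ _ => phi_cont.intervalIntegrable _ _) 0

lemma Phi_sub (u v : ℝ) : Phi v - Phi u = ∫ x in u..v, phi x := by
  rw [Phi, Phi, intervalIntegral.integral_interval_sub_left (phi_cont.intervalIntegrable _ _)
    (phi_cont.intervalIntegrable _ _)]

lemma Phi_mono : Monotone Phi := by
  intro u v h
  have := Phi_sub u v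
  have h2 : 0 ≤ ∫ x in u..v, phi x :=
    intervalIntegral.integral_nonneg h (fun x _ => (phi_pos x).le)
  linarith

lemma oint_phi (u v : ℝ) : oint u v phi = max (Phi v - Phi u) 0 := by
  rcases le_or_gt u v with h | h
  · rw [oint, ← intervalIntegral.integral_of_le h, ← Phi_sub,
      max_eq_left (by linarith [Phi_mono h])]
  · rw [oint, Set.Ioc_eq_empty (not_lt.2 h.le), Measure.restrict_empty, integral_zero_measure,
      max_eq_right (by linarith [Phi_mono h.le])]

section
variable (b d : ℝ)

noncomputable def g3 (t z y : ℝ) : ℝ := (phi y)⁻¹ * oint (max y b) (min d (y - z + t)) phi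

lemma g3_eq (t z y : ℝ) :
    g3 b d t z y = (phi y)⁻¹ * max (Phi (min d (y - z + t)) - Phi (max y b)) 0 := by
  rw [g3, oint_phi]

lemma g3_nonneg (t z y : ℝ) : 0 ≤ g3 b d t z y := by
  rw [g3_eq]
  exact mul_nonneg (inv_nonneg.2 (phi_pos y).le) (le_max_right _ _)

lemma g3_mono (z y : ℝ) : Monotone (fun t => g3 b d t z y) := by
  intro t1 t2 h
  simp only [g3_eq]
  refine mul_le_mul_of_nonneg_left (max_le_max ?_ le_rfl) (inv_nonneg.2 (phi_pos y).le)
  exact sub_le_sub_right (Phi_mono (min_le_min le_rfl (by linarith))) _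

lemma g3_cont (t : ℝ) : Continuous (fun p : ℝ × ℝ => g3 b d t p.1 p.2) := by
  simp only [g3_eq]
  exact (phi_inv_cont.comp continuous_snd).mul
    (((Phi_cont.comp (continuous_const.min ((continuous_snd.sub continuous_fst).add continuous_const))).sub
      (Phi_cont.comp (continuous_snd.max continuous_const))).max continuous_const)

noncomputable def Hm (t z : ℝ) : ℝ := oint 0 z (fun y => g3 b d t z y)

lemma Hm_nonneg (t z : ℝ) : 0 ≤ Hm b d t z :=
  setIntegral_nonneg measurableSet_Ioc (fun y _ => g3_nonneg b d t z y)

lemma g3_integrableOn (t z : ℝ) : IntegrableOn (fun y => g3 b d t z y) (Set.Ioc 0 z) :=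
  ((g3_cont b d t).comp (Continuous.prodMk_right z)).integrableOn_Ioc

lemma Hm_mono (z : ℝ) : Monotone (fun t => Hm b d t z) := by
  intro t1 t2 h
  exact setIntegral_mono_on (g3_integrableOn b d t1 z) (g3_integrableOn b d t2 z)
    measurableSet_Ioc (fun y _ => g3_mono b d z y h)

lemma Hm_eq_interval (t z : ℝ) (hz : 0 ≤ z) :
    Hm b d t z = ∫ y in (0:ℝ)..z, g3 b d t z y := by
  rw [Hm, oint, intervalIntegral.integral_of_le hz]

lemma Hm_cont_aux (t : ℝ) : Continuous (fun z => ∫ y in (0:ℝ)..z, g3 b d t z y) :=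
  intervalIntegral.continuous_parametric_intervalIntegral_of_continuous
    (f := fun z y => g3 b d t z y) (g3_cont b d t) continuous_id
end

section
variable (b d : ℝ)

noncomputable def Gf (t : ℝ) : ℝ := oint b (min d t) (fun z => phi z * Hm b d t z)

lemma Gf_nonneg (t : ℝ) : 0 ≤ Gf b d t :=
  setIntegral_nonneg measurableSet_Ioc (fun z _ => mul_nonneg (phi_pos z).le (Hm_nonneg b d t z))

lemma Gf_integrand_integrableOn (hb : 0 ≤ b) (t v : ℝ) :
    IntegrableOn (fun z => phi z * Hm b d t z) (Set.Ioc b v) := by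
  have hc : Continuous (fun z => phi z * ∫ y in (0:ℝ)..z, g3 b d t z y) :=
    phi_cont.mul (Hm_cont_aux b d t)
  refine (hc.integrableOn_Ioc).congr_fun ?_ measurableSet_Ioc
  intro z hz
  simp only [Hm_eq_interval b d t z (le_trans hb hz.1.le)]

lemma Gf_mono (hb : 0 ≤ b) : Monotone (Gf b d) := by
  intro t1 t2 h
  have h1 : Gf b d t1 ≤ ∫ z in Set.Ioc b (min d t1), phi z * Hm b d t2 z :=
    setIntegral_mono_on (Gf_integrand_integrableOn b d hb t1 _)
      (Gf_integrand_integrableOn b d hb t2 _) measurableSet_Ioc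
      (fun z _ => mul_le_mul_of_nonneg_left (Hm_mono b d z h) (phi_pos z).le)
  refine h1.trans (setIntegral_mono_set (Gf_integrand_integrableOn b d hb t2 _)
    (Eventually.of_forall (fun z => mul_nonneg (phi_pos z).le (Hm_nonneg b d t2 z)))
    (HasSubset.Subset.eventuallyLE (Set.Ioc_subset_Ioc_right (min_le_min le_rfl h))))

noncomputable def Glim : ℝ :=
  oint b d (fun z => phi z * oint 0 z (fun y => (phi y)⁻¹ * oint (max y b) d phi))

lemma Gf_eq_Glim (hb : 0 ≤ b) (hd : 0 ≤ d) {t : ℝ} (ht : 2*d ≤ t) : Gf b d t = Glim b d := by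
  have hmin : min d t = d := min_eq_left (by linarith)
  rw [Gf, hmin, Glim, oint, oint]
  refine setIntegral_congr_fun measurableSet_Ioc (fun z hz => ?_)
  congr 1
  rw [Hm, oint, oint]
  refine setIntegral_congr_fun measurableSet_Ioc (fun y hy => ?_)
  rw [g3]
  have : min d (y - z + t) = d := min_eq_left (by
    rcases hz with ⟨_, hz2⟩; rcases hy with ⟨hy1, _⟩; linarith)
  rw [this]

lemma Gf_le_Glim (hb : 0 ≤ b) (hd : 0 ≤ d) (t : ℝ) : Gf b d t ≤ Glim b d := by
  rcases le_total t (2*d) with h | h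
  · rw [← Gf_eq_Glim b d hb hd (le_max_right t (2*d))]
    exact Gf_mono b d hb (le_max_left _ _)
  · rw [Gf_eq_Glim b d hb hd h]
end

lemma intervalInt_phi (y d : ℝ) : (∫ x in y..d, phi x) = Phi d - Phi y := (Phi_sub y d).symm

lemma Glim_eq (b d : ℝ) (hb : 0 ≤ b) (hbd : b < d) :
    Glim b d = (∫ x in b..d, phi x) ^ 2 * (∫ y in (0:ℝ)..b, (phi y)⁻¹)
      + ∫ z in b..d, phi z * ∫ y in b..z, (phi y)⁻¹ * ∫ x in y..d, phi x := by
  set K : ℝ := ∫ x in b..d, phi x with hK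
  set C : ℝ := ∫ y in (0:ℝ)..b, (phi y)⁻¹ with hC
  set ψ : ℝ → ℝ := fun z => ∫ y in b..z, (phi y)⁻¹ * ∫ x in y..d, phi x with hψ
  have hwcont : Continuous (fun y => (phi y)⁻¹ * oint (max y b) d phi) := by
    simp only [oint_phi]
    exact phi_inv_cont.mul (((continuous_const.sub
      (Phi_cont.comp (continuous_id.max continuous_const))).max continuous_const))
  -- step A
  have stepA : ∀ z ∈ Set.Ioc b d,
      oint 0 z (fun y => (phi y)⁻¹ * oint (max y b) d phi) = C * K + ψ z := by
    intro z hz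
    have hbz : b ≤ z := hz.1.le
    have hzd : z ≤ d := hz.2
    rw [oint, ← Set.Ioc_union_Ioc_eq_Ioc hb hbz,
      setIntegral_union (Set.Ioc_disjoint_Ioc_of_le le_rfl) measurableSet_Ioc
        hwcont.integrableOn_Ioc hwcont.integrableOn_Ioc]
    congr 1
    · have : ∀ y ∈ Set.Ioc (0:ℝ) b,
          (phi y)⁻¹ * oint (max y b) d phi = (phi y)⁻¹ * oint b d phi := by
        intro y hy
        rw [max_eq_right hy.2]
      rw [setIntegral_congr_fun measurableSet_Ioc this, integral_mul_const,
        ← intervalIntegral.integral_of_le hb, ← hC]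
      congr 1
      rw [oint, ← intervalIntegral.integral_of_le hbd.le]
    · have : ∀ y ∈ Set.Ioc b z,
          (phi y)⁻¹ * oint (max y b) d phi = (phi y)⁻¹ * ∫ x in y..d, phi x := by
        intro y hy
        rw [max_eq_left hy.1.le, oint, ← intervalIntegral.integral_of_le (hy.2.trans hzd)]
      rw [setIntegral_congr_fun measurableSet_Ioc this, ← intervalIntegral.integral_of_le hbz]
  have hψcont : Continuous ψ := by
    refine intervalIntegral.continuous_primitive (fun u v => Continuous.intervalIntegrable ?_ u v) b
    simp only [intervalInt_phi]
    fun_prop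
  have : Glim b d = ∫ z in Set.Ioc b d, (phi z * (C * K) + phi z * ψ z) := by
    rw [Glim, oint]
    refine setIntegral_congr_fun measurableSet_Ioc (fun z hz => ?_)
    rw [stepA z hz, mul_add]
  rw [this, integral_add (f := fun z => phi z * (C * K)) (g := fun z => phi z * ψ z) ((phi_cont.mul continuous_const).integrableOn_Ioc)
    ((phi_cont.mul hψcont).integrableOn_Ioc), integral_mul_const,
    ← intervalIntegral.integral_of_le hbd.le, ← intervalIntegral.integral_of_le hbd.le, ← hK]
  ring

/-- asymptotics of the triple integral `F(λ)`. -/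
theorem triple_integral_limit_F (b d : ℝ) (hb : 0 ≤ b) (hbd : b < d) :
    Tendsto (fun lam : ℝ =>
        oint 0 (1 - b / Real.sqrt lam) (fun a1 =>
          oint b (min d (Real.sqrt lam * (1 - a1))) (fun z => phi z *
            oint 0 z (fun y => (phi y)⁻¹ *
              oint (max y b) (min d (y - z + Real.sqrt lam * (1 - a1))) phi))))
      atTop
      (nhds ((∫ x in b..d, phi x) ^ 2 * (∫ y in (0:ℝ)..b, (phi y)⁻¹)
        + ∫ z in b..d, phi z * ∫ y in b..z, (phi y)⁻¹ * ∫ x in y..d, phi x)) := by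
  have hd : 0 < d := lt_of_le_of_lt hb hbd
  rw [← Glim_eq b d hb hbd]
  show Tendsto (fun lam : ℝ =>
      oint 0 (1 - b / Real.sqrt lam) (fun a1 => Gf b d (Real.sqrt lam * (1 - a1))))
    atTop (nhds (Glim b d))
  set L := Glim b d with hL
  -- key bounds for √lam ≥ 2d
  have key : ∀ s : ℝ, 2*d ≤ s →
      (1 - 2*d/s) * L ≤ oint 0 (1 - b/s) (fun a => Gf b d (s*(1-a))) ∧
      oint 0 (1 - b/s) (fun a => Gf b d (s*(1-a))) ≤ (1 - 2*d/s) * L + (2*d/s - b/s) * L := by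
    intro s hs
    have hs0 : 0 < s := lt_of_lt_of_le (by linarith) hs
    have h2ds : 2*d/s ≤ 1 := (div_le_one hs0).2 hs
    have hbs : b/s ≤ 2*d/s := (div_le_div_iff_of_pos_right hs0).2 (by linarith)
    have hanti : Antitone (fun a => Gf b d (s*(1-a))) := by
      intro a1 a2 h
      exact Gf_mono b d hb (mul_le_mul_of_nonneg_left (by linarith) hs0.le)
    have hbdd : ∀ a : ℝ, ‖Gf b d (s*(1-a))‖ ≤ L := by
      intro a
      rw [Real.norm_eq_abs, abs_of_nonneg (Gf_nonneg b d _)]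
      exact Gf_le_Glim b d hb hd.le _
    have hint : ∀ u v : ℝ, IntegrableOn (fun a => Gf b d (s*(1-a))) (Set.Ioc u v) := by
      intro u v
      exact Measure.integrableOn_of_bounded measure_Ioc_lt_top.ne
        hanti.measurable.aestronglyMeasurable (ae_of_all _ hbdd)
    have hsplit : Set.Ioc 0 (1 - b/s) =
        Set.Ioc 0 (1 - 2*d/s) ∪ Set.Ioc (1 - 2*d/s) (1 - b/s) :=
      (Set.Ioc_union_Ioc_eq_Ioc (by linarith) (by linarith)).symm
    have hE : oint 0 (1 - b/s) (fun a => Gf b d (s*(1-a))) =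
        (1 - 2*d/s) * L + ∫ a in Set.Ioc (1 - 2*d/s) (1 - b/s), Gf b d (s*(1-a)) := by
      rw [oint, hsplit, setIntegral_union (Set.Ioc_disjoint_Ioc_of_le le_rfl) measurableSet_Ioc
        (hint _ _) (hint _ _)]
      congr 1
      have hconst : ∀ a ∈ Set.Ioc (0:ℝ) (1 - 2*d/s), Gf b d (s*(1-a)) = L := by
        intro a ha
        refine Gf_eq_Glim b d hb hd.le ?_
        have h1 : 2*d/s ≤ 1 - a := by linarith [ha.2]
        calc 2*d = 2*d/s * s := by field_simp
        _ ≤ (1-a) * s := mul_le_mul_of_nonneg_right h1 hs0.le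
        _ = s * (1-a) := mul_comm _ _
      rw [setIntegral_congr_fun measurableSet_Ioc hconst, setIntegral_const,
        Real.volume_real_Ioc_of_le (by linarith), smul_eq_mul, sub_zero]
    constructor
    · rw [hE]
      have : 0 ≤ ∫ a in Set.Ioc (1 - 2*d/s) (1 - b/s), Gf b d (s*(1-a)) :=
        setIntegral_nonneg measurableSet_Ioc (fun a _ => Gf_nonneg b d _)
      linarith
    · rw [hE]
      have : (∫ a in Set.Ioc (1 - 2*d/s) (1 - b/s), Gf b d (s*(1-a))) ≤
          (2*d/s - b/s) * L := by
        have h1 : (∫ a in Set.Ioc (1 - 2*d/s) (1 - b/s), Gf b d (s*(1-a))) ≤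
            ∫ _ in Set.Ioc (1 - 2*d/s) (1 - b/s), L :=
          setIntegral_mono_on (hint _ _) (integrableOn_const measure_Ioc_lt_top.ne)
            measurableSet_Ioc (fun a _ => Gf_le_Glim b d hb hd.le _)
        refine h1.trans ?_
        rw [setIntegral_const, Real.volume_real_Ioc_of_le (by linarith), smul_eq_mul]
        apply le_of_eq; ring_nf
      linarith
  -- limits of the bounding functions
  have hsq : Tendsto Real.sqrt atTop atTop := by
    apply tendsto_atTop_atTop.2
    intro C
    refine ⟨max (C^2) 0, fun lam h => ?_⟩
    calc C ≤ √(C^2) := by rw [Real.sqrt_sq_eq_abs]; exact le_abs_self C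
    _ ≤ √lam := Real.sqrt_le_sqrt ((le_max_left _ _).trans h)
  have hlow : Tendsto (fun lam : ℝ => (1 - 2*d/Real.sqrt lam) * L) atTop (nhds L) := by
    have := ((tendsto_const_nhds (x := (1:ℝ))).sub (Tendsto.const_div_atTop hsq (2*d))).mul
      (tendsto_const_nhds (x := L))
    simpa using this
  have hup : Tendsto (fun lam : ℝ => (1 - 2*d/Real.sqrt lam) * L + (2*d/Real.sqrt lam - b/Real.sqrt lam) * L) atTop (nhds L) := by
    have := (((tendsto_const_nhds (x := (1:ℝ))).sub (Tendsto.const_div_atTop hsq (2*d))).mul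
      (tendsto_const_nhds (x := L))).add
      (((Tendsto.const_div_atTop hsq (2*d)).sub (Tendsto.const_div_atTop hsq b)).mul
      (tendsto_const_nhds (x := L)))
    simpa using this
  refine tendsto_of_tendsto_of_tendsto_of_le_of_le' hlow hup ?_ ?_
  · filter_upwards [eventually_ge_atTop ((2*d)^2)] with lam hlam
    have : 2*d ≤ Real.sqrt lam := by
      calc 2*d ≤ √((2*d)^2) := by rw [Real.sqrt_sq (by linarith)]
      _ ≤ √lam := Real.sqrt_le_sqrt hlam
    exact (key _ this).1
  · filter_upwards [eventually_ge_atTop ((2*d)^2)] with lam hlam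
    have : 2*d ≤ Real.sqrt lam := by
      calc 2*d ≤ √((2*d)^2) := by rw [Real.sqrt_sq (by linarith)]
      _ ≤ √lam := Real.sqrt_le_sqrt hlam
    exact (key _ this).2
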